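/- arXiv:2409.09809 — 2 statements merged into one kernel-verified Lean document; each statement's English description precedes it below -/
import Mathlib

section
/- Let f be a formal power series with f(0) = 0 and f'(0) = q. Then for every natural number s, the first derivative of the s-fold compositional iterate f^s at 0 equals q^s, and the second derivative of f^s at 0 equals a_2 q^{s-1} [s]_q, where a_2 = f''(0) and [s]_q = 1 + q + \cdots + q^{s-1}. -/
open Finset PowerSeries

private lemma trunc_two (g : PowerSeries ℂ) (h0 : PowerSeries.constantCoeff g = 0) :
    PowerSeries.trunc 2 g = Polynomial.C (PowerSeries.coeff 1 g) * Polynomial.X := by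
  ext n
  rw [PowerSeries.coeff_trunc]
  match n with
  | 0 => simpa [PowerSeries.coeff_zero_eq_constantCoeff] using h0
  | 1 => simp
  | (k+2) => simp

private lemma trunc_three (g : PowerSeries ℂ) (h0 : PowerSeries.constantCoeff g = 0) :
    PowerSeries.trunc 3 g = Polynomial.C (PowerSeries.coeff 1 g) * Polynomial.X
      + Polynomial.C (PowerSeries.coeff 2 g) * Polynomial.X ^ 2 := by
  ext n
  rw [PowerSeries.coeff_trunc]
  match n with
  | 0 => simpa [PowerSeries.coeff_zero_eq_constantCoeff] using h0
  | 1 => simp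
  | 2 => simp
  | (k+3) => simp

private lemma comp_coeff_one (a c : ℂ) :
    ((Polynomial.C a * Polynomial.X).comp (Polynomial.C c * Polynomial.X) : Polynomial ℂ).coeff 1
      = a * c := by
  simp only [Polynomial.mul_comp, Polynomial.C_comp, Polynomial.X_comp]
  simp [mul_assoc, Polynomial.coeff_C_mul]

private lemma comp_coeff_two (a b c d : ℂ) :
    ((Polynomial.C a * Polynomial.X + Polynomial.C b * Polynomial.X ^ 2).comp
        (Polynomial.C c * Polynomial.X + Polynomial.C d * Polynomial.X ^ 2) : Polynomial ℂ).coeff 2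
      = a * d + b * c ^ 2 := by
  simp only [Polynomial.add_comp, Polynomial.mul_comp, Polynomial.pow_comp,
    Polynomial.C_comp, Polynomial.X_comp]
  have h1 : (Polynomial.C c * Polynomial.X + Polynomial.C d * Polynomial.X ^ 2 : Polynomial ℂ) ^ 2
      = Polynomial.C (c ^ 2) * Polynomial.X ^ 2 + Polynomial.C (2 * c * d) * Polynomial.X ^ 3
        + Polynomial.C (d ^ 2) * Polynomial.X ^ 4 := by
    simp only [map_mul, map_pow, map_ofNat]
    ring
  rw [h1]
  simp only [Polynomial.coeff_add, Polynomial.coeff_C_mul, Polynomial.coeff_X_pow,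
    Polynomial.coeff_X]
  norm_num

/-- For a formal power series `f` with `f(0) = 0` and `f'(0) = q`, the iterates
`F s = f^{∘s}` (characterized coefficientwise through truncated polynomial
composition) satisfy `(f^s)'(0) = q^s` and `(f^s)''(0) = a₂ q^{s-1} [s]_q`,
where `a₂ = f''(0) = 2·[x²]f`. -/
theorem iterate_first_two_derivs (f : PowerSeries ℂ)
    (hf0 : PowerSeries.constantCoeff f = 0) (q : ℂ)
    (hq : PowerSeries.coeff 1 f = q)
    (F : ℕ → PowerSeries ℂ) (hF0 : F 0 = PowerSeries.X)
    (hFs : ∀ s n : ℕ, PowerSeries.coeff n (F (s + 1)) =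
      ((PowerSeries.trunc (n + 1) f).comp (PowerSeries.trunc (n + 1) (F s))).coeff n)
    (s : ℕ) :
    PowerSeries.coeff 1 (F s) = q ^ s ∧
      2 * PowerSeries.coeff 2 (F s) =
        (2 * PowerSeries.coeff 2 f) * q ^ (s - 1) * ∑ i ∈ Finset.range s, q ^ i := by
  -- constant coefficients are all zero
  have h0 : ∀ s, PowerSeries.constantCoeff (F s) = 0 := by
    intro s
    match s with
    | 0 => simp [hF0]
    | (t+1) =>
      have := hFs t 0
      rw [← PowerSeries.coeff_zero_eq_constantCoeff_apply, this]
      have h1 : PowerSeries.trunc 1 f = 0 := by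
        ext n
        rw [PowerSeries.coeff_trunc]
        match n with
        | 0 => simpa using hf0
        | (k+1) => simp
      simp [h1]
  -- first coefficients
  have h1 : ∀ s, PowerSeries.coeff 1 (F s) = q ^ s := by
    intro s
    induction s with
    | zero => simp [hF0]
    | succ t ih =>
      rw [hFs t 1, trunc_two f hf0, trunc_two (F t) (h0 t), hq, comp_coeff_one, ih,
        pow_succ, mul_comm]
  -- second coefficient recursion
  have h2 : ∀ t, PowerSeries.coeff 2 (F (t + 1)) =
      q * PowerSeries.coeff 2 (F t) + PowerSeries.coeff 2 f * (q ^ t) ^ 2 := by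
    intro t
    rw [hFs t 2, trunc_three f hf0, trunc_three (F t) (h0 t), hq, comp_coeff_two, h1 t]
  refine ⟨h1 s, ?_⟩
  induction s with
  | zero => simp [hF0, PowerSeries.coeff_X]
  | succ t ih =>
    match t with
    | 0 => simp [h2 0, hF0, PowerSeries.coeff_X]
    | (u+1) =>
      rw [h2 (u+1), Finset.sum_range_succ]
      simp only [Nat.add_sub_cancel] at ih ⊢
      linear_combination q * ih
end

section
/- For q \ne 1 (and q not a root of unity as needed), the derivative with respect to s at s = 0 of the generalized q-binomial coefficient \binom{s}{p}_q = \prod_{\ell=0}^{p-1} [s - \ell]_q / [p]_q! (with [s]_q = (q^s - 1)/(q - 1), q^s = e^{s \log q}) equals (\log q)/(q-1) \cdot (-1)^{p-1} q^{-\binom{p}{2}} / [p]_q, for p \ge 1. -/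
open Finset

/-- For `q > 0`, `q ≠ 1`, the derivative at `s = 0` of the generalized `q`-binomial
coefficient `s ↦ (s choose p)_q = ∏_{ℓ<p} [s-ℓ]_q / [p]_q!` (with `[s]_q = (q^s-1)/(q-1)`)
equals `(log q)/(q-1) · (-1)^{p-1} q^{-C(p,2)} / [p]_q`, for `p ≥ 1`. -/
theorem deriv_qBinom_at_zero (q : ℝ) (hq0 : 0 < q) (hq1 : q ≠ 1) (p : ℕ) (hp : 1 ≤ p) :
    deriv (fun s : ℝ =>
        (∏ ℓ ∈ Finset.range p, (q ^ (s - (ℓ : ℝ)) - 1) / (q - 1)) /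
          ∏ i ∈ Finset.range p, (q ^ (i + 1) - 1) / (q - 1)) 0 =
      Real.log q / (q - 1) *
        ((-1) ^ (p - 1) * q ^ (-(p.choose 2 : ℤ)) / ((q ^ p - 1) / (q - 1))) := by
  obtain ⟨m, rfl⟩ : ∃ m, p = m + 1 := ⟨p - 1, (Nat.succ_pred_eq_of_pos hp).symm⟩
  have hq1' : q - 1 ≠ 0 := sub_ne_zero.mpr hq1
  have hpow1 : ∀ n : ℕ, q ^ (n + 1) ≠ 1 := by
    intro n
    rcases lt_or_gt_of_ne hq1 with h | h
    · exact ne_of_lt (pow_lt_one₀ hq0.le h n.succ_ne_zero)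
    · exact ne_of_gt (one_lt_pow₀ h n.succ_ne_zero)
  set g : ℝ → ℝ := fun s => (q ^ s - 1) / (q - 1) with hg
  set h : ℝ → ℝ := fun s => ∏ i ∈ Finset.range m, (q ^ (s - ((i : ℝ) + 1)) - 1) / (q - 1) with hh
  set C : ℝ := ∏ i ∈ Finset.range (m + 1), (q ^ (i + 1) - 1) / (q - 1) with hC
  have hfun : (fun s : ℝ =>
      (∏ ℓ ∈ Finset.range (m + 1), (q ^ (s - (ℓ : ℝ)) - 1) / (q - 1)) / C)
      = fun s => h s * g s / C := by
    funext s
    rw [Finset.prod_range_succ']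
    push_cast
    simp [hh, hg]
  have hgd : HasDerivAt g (Real.log q / (q - 1)) 0 := by
    have := ((Real.hasStrictDerivAt_const_rpow hq0 0).hasDerivAt.sub_const 1).div_const (q - 1)
    simpa using this
  have hfac : ∀ i : ℕ, HasDerivAt (fun s : ℝ => (q ^ (s - ((i : ℝ) + 1)) - 1) / (q - 1))
      (q ^ ((0:ℝ) - ((i : ℝ) + 1)) * Real.log q / (q - 1)) 0 := by
    intro i
    have h1 : HasDerivAt (fun s : ℝ => s - ((i : ℝ) + 1)) 1 0 :=
      (hasDerivAt_id 0).sub_const _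
    have h2 := ((Real.hasStrictDerivAt_const_rpow hq0 ((0:ℝ) - ((i:ℝ)+1))).hasDerivAt.comp 0 h1)
    simpa [mul_comm] using (h2.sub_const 1).div_const (q - 1)
  have hhd : DifferentiableAt ℝ h 0 := by
    apply (HasDerivAt.fun_finsetProd (u := Finset.range m)
      (f := fun i s => (q ^ (s - ((i : ℝ) + 1)) - 1) / (q - 1))
      (f' := fun i => q ^ ((0:ℝ) - ((i : ℝ) + 1)) * Real.log q / (q - 1))
      (fun i _ => hfac i)).differentiableAt
  have hg0 : g 0 = 0 := by simp [hg]
  have hD : deriv (fun s => h s * g s / C) 0 = h 0 * (Real.log q / (q - 1)) / C := by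
    have := ((hhd.hasDerivAt.mul hgd).div_const C).deriv
    rw [show (fun s => h s * g s / C) = fun x => (h * g) x / C from rfl, this, hg0]
    ring
  rw [hfun, hD]
  -- compute h 0
  have hh0 : h 0 = (-1) ^ m * (q ^ ((m+1).choose 2))⁻¹ *
      ∏ i ∈ Finset.range m, (q ^ (i + 1) - 1) / (q - 1) := by
    have hfact : ∀ i : ℕ, (q ^ ((0:ℝ) - ((i : ℝ) + 1)) - 1) / (q - 1)
        = (-1) * (q ^ (i+1))⁻¹ * ((q ^ (i + 1) - 1) / (q - 1)) := by
      intro i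
      have heq : q ^ ((0:ℝ) - ((i : ℝ) + 1)) = (q ^ (i+1))⁻¹ := by
        rw [show ((0:ℝ) - ((i:ℝ) + 1)) = -(((i+1 : ℕ)):ℝ) by push_cast; ring,
          Real.rpow_neg hq0.le, Real.rpow_natCast]
      rw [heq]
      have hqn : (q : ℝ) ^ (i+1) ≠ 0 := pow_ne_zero _ hq0.ne'
      field_simp
      ring
    have hsum : ∑ i ∈ Finset.range m, (i + 1) = (m+1).choose 2 := by
      have h1 : ∑ i ∈ Finset.range (m+1), i = ∑ i ∈ Finset.range m, (i + 1) := by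
        rw [Finset.sum_range_succ']; simp
      rw [← h1, Finset.sum_range_id, Nat.choose_two_right]
    calc h 0 = ∏ i ∈ Finset.range m,
        ((-1) * (q ^ (i+1))⁻¹ * ((q ^ (i + 1) - 1) / (q - 1))) := by
          simp only [hh]; exact Finset.prod_congr rfl fun i _ => hfact i
      _ = ((-1)^m) * (∏ i ∈ Finset.range m, (q ^ (i+1))⁻¹) *
          ∏ i ∈ Finset.range m, (q ^ (i + 1) - 1) / (q - 1) := by
          rw [Finset.prod_mul_distrib, Finset.prod_mul_distrib, Finset.prod_const,
            Finset.card_range]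
      _ = _ := by
          congr 2
          rw [← hsum, ← Finset.prod_pow_eq_pow_sum, ← Finset.prod_inv_distrib]
  have hBne : (∏ i ∈ Finset.range m, (q ^ (i + 1) - 1) / (q - 1)) ≠ 0 :=
    Finset.prod_ne_zero_iff.mpr fun i _ =>
      div_ne_zero (sub_ne_zero.mpr (hpow1 i)) hq1'
  have hCeq : C = (∏ i ∈ Finset.range m, (q ^ (i + 1) - 1) / (q - 1)) *
      ((q ^ (m + 1) - 1) / (q - 1)) := by
    rw [hC, Finset.prod_range_succ]
  rw [hh0, hCeq]
  have hz : q ^ (-(((m+1).choose 2 : ℕ) : ℤ)) = (q ^ ((m+1).choose 2))⁻¹ := by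
    rw [zpow_neg, zpow_natCast]
  rw [hz]
  simp only [Nat.add_sub_cancel]
  set B := ∏ i ∈ Finset.range m, (q ^ (i + 1) - 1) / (q - 1) with hB
  set A := (q ^ (m + 1) - 1) / (q - 1) with hA
  have hqn : (q : ℝ) ^ ((m+1).choose 2) ≠ 0 := pow_ne_zero _ hq0.ne'
  have hAne : A ≠ 0 := div_ne_zero (sub_ne_zero.mpr (hpow1 m)) hq1'
  field_simp
end
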